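/- (The transformation σ₂₃ is an involution.) Let t₁, t₂, θ₁, θ₂, κ₀, κ₁, κ∞, q₁, q₂, p₁, p₂ ∈ ℂ with t₁ ≠ 0, t₂ ≠ 0, t₂ ≠ 1, t₁ ≠ t₂. Set g_t = q₁/t₁ + q₂/t₂. Define the transformation σ₂₃ by: θ₂ ↔ κ₀ (other parameters fixed), t₁ ↦ (t₂−t₁)/(t₂−1), t₂ ↦ t₂/(t₂−1), q₁ ↦ ((t₂−t₁)/(t₁(t₂−1)))·q₁, q₂ ↦ (t₂/(1−t₂))·(g_t−1), p₁ ↦ ((t₂−1)/(t₂−t₁))·(t₁p₁−t₂p₂), p₂ ↦ (1−t₂)·p₂. Then the transformed values again satisfy the nondegeneracy conditions needed to apply σ₂₃ (in particular the new t₁, t₂ are nonzero, the new t₂ ≠ 1, and the new t₁ ≠ new t₂), and applying σ₂₃ twice returns the original values of (t₁,t₂), of the parameters (θ₁,θ₂,κ₀,κ₁,κ∞), and of the variables (q₁,q₂,p₁,p₂). -/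

import Mathlib

/-- The birational canonical transformation σ₂₃ of the Garnier system in two
variables is an involution: the transformed values again satisfy the
nondegeneracy conditions needed to apply σ₂₃, and applying σ₂₃ twice returns
the original values of (t₁,t₂), of the parameters (θ₁,θ₂,κ₀,κ₁,κ∞) and of the
canonical variables (q₁,q₂,p₁,p₂). Here `κi` denotes κ∞, σ₂₃ swaps θ₂ ↔ κ₀,
and g_t = q₁/t₁ + q₂/t₂. -/
theorem stmt_16 (t1 t2 θ1 θ2 κ0 κ1 κi q1 q2 p1 p2 : ℂ)
    (ht1 : t1 ≠ 0) (ht2 : t2 ≠ 0) (ht2' : t2 ≠ 1) (ht12 : t1 ≠ t2)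
    (gt : ℂ) (hgt : gt = q1 / t1 + q2 / t2)
    -- first application of σ₂₃
    (t1' t2' q1' q2' p1' p2' : ℂ)
    (ht1'd : t1' = (t2 - t1) / (t2 - 1)) (ht2'd : t2' = t2 / (t2 - 1))
    (hq1' : q1' = ((t2 - t1) / (t1 * (t2 - 1))) * q1)
    (hq2' : q2' = (t2 / (1 - t2)) * (gt - 1))
    (hp1' : p1' = ((t2 - 1) / (t2 - t1)) * (t1 * p1 - t2 * p2))
    (hp2' : p2' = (1 - t2) * p2)
    -- second application of σ₂₃
    (gt' : ℂ) (hgt' : gt' = q1' / t1' + q2' / t2')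
    (t1'' t2'' q1'' q2'' p1'' p2'' : ℂ)
    (ht1'' : t1'' = (t2' - t1') / (t2' - 1)) (ht2'' : t2'' = t2' / (t2' - 1))
    (hq1'' : q1'' = ((t2' - t1') / (t1' * (t2' - 1))) * q1')
    (hq2'' : q2'' = (t2' / (1 - t2')) * (gt' - 1))
    (hp1'' : p1'' = ((t2' - 1) / (t2' - t1')) * (t1' * p1' - t2' * p2'))
    (hp2'' : p2'' = (1 - t2') * p2') :
    -- the transformed values satisfy the nondegeneracy conditions
    (t1' ≠ 0 ∧ t2' ≠ 0 ∧ t2' ≠ 1 ∧ t1' ≠ t2')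
    -- the independent variables return to their original values
    ∧ t1'' = t1 ∧ t2'' = t2
    -- the parameters return to their original values (θ₂ ↔ κ₀ applied twice)
    ∧ ((θ1, θ2, κ0, κ1, κi) = ((θ1 : ℂ), (θ2 : ℂ), (κ0 : ℂ), (κ1 : ℂ),
        (κi : ℂ)))
    -- the canonical variables return to their original values
    ∧ q1'' = q1 ∧ q2'' = q2 ∧ p1'' = p1 ∧ p2'' = p2 := by
  have h1 : t2 - 1 ≠ 0 := sub_ne_zero.mpr ht2'
  have h1' : 1 - t2 ≠ 0 := fun h => h1 (by linear_combination -h)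
  have h2 : t2 - t1 ≠ 0 := sub_ne_zero.mpr (Ne.symm ht12)
  have ht1'0 : t1' ≠ 0 := ht1'd ▸ div_ne_zero h2 h1
  have ht2'0 : t2' ≠ 0 := ht2'd ▸ div_ne_zero ht2 h1
  have ht2'1 : t2' ≠ 1 := by
    rw [ht2'd]
    intro h
    rw [div_eq_one_iff_eq h1] at h
    exact one_ne_zero (by linear_combination h)
  have ht1'2' : t1' ≠ t2' := by
    rw [ht1'd, ht2'd]
    intro h
    field_simp at h
    exact ht1 (by linear_combination -h)
  refine ⟨⟨ht1'0, ht2'0, ht2'1, ht1'2'⟩, ?_, ?_, rfl, ?_, ?_, ?_, ?_⟩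
  · rw [ht1'', ht1'd, ht2'd]; field_simp; ring
  · rw [ht2'', ht2'd]; field_simp; ring
  · rw [hq1'', hq1', ht1'd, ht2'd]; field_simp [ht1, ht2, h1, h1', h2]; ring
  · have hne : 1 - t2' ≠ 0 := sub_ne_zero.mpr (Ne.symm ht2'1)
    have e1 : q1' / t1' = q1 / t1 := by
      rw [div_eq_div_iff ht1'0 ht1, hq1', ht1'd]
      field_simp
    have e2 : q2' / t2' = 1 - gt := by
      rw [div_eq_iff ht2'0, hq2', ht2'd, hgt]
      field_simp
      ring
    have hgt2 : gt' = 1 - q2 / t2 := by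
      rw [hgt', e1, e2, hgt]; ring
    have e3 : t2' / (1 - t2') = -t2 := by
      rw [div_eq_iff hne, ht2'd]
      field_simp
      ring
    rw [hq2'', e3, hgt2]
    field_simp
    ring
  · rw [hp1'', hp1', hp2', ht1'd, ht2'd]; field_simp [ht1, ht2, h1, h1', h2]; ring
  · rw [hp2'', hp2', ht2'd]; field_simp [ht1, ht2, h1, h1', h2]; ring
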